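/- Let Γ be a simple graph of order n and let μ be the algebraic connectivity of Γ (the second smallest eigenvalue of the Laplacian matrix of Γ). Then every defensive alliance S in Γ satisfies |S| ≥ ⌈nμ/(n+μ)⌉; in particular the defensive alliance number satisfies a(Γ) ≥ ⌈nμ/(n+μ)⌉. -/

import Mathlib

open Finset SimpleGraph

/-- `μ` is the second smallest (counted with multiplicity) value of the family `e`. -/
def IsSecondSmallest {ι : Type*} (e : ι → ℝ) (μ : ℝ) : Prop :=
  ∃ i₀ i₁ : ι, i₀ ≠ i₁ ∧ e i₀ ≤ μ ∧ e i₁ = μ ∧ ∀ j : ι, j ≠ i₀ → μ ≤ e j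

/-- `lam` is the largest value of the family `e`. -/
def IsLargest {ι : Type*} (e : ι → ℝ) (lam : ℝ) : Prop :=
  (∃ i : ι, e i = lam) ∧ ∀ i : ι, e i ≤ lam

open Matrix
open scoped RealInnerProductSpace

private lemma dot_eq_inner' {V : Type*} [Fintype V] (a b : EuclideanSpace ℝ V) :
    (a : V → ℝ) ⬝ᵥ (b : V → ℝ) = ⟪a, b⟫ := by
  simp [dotProduct, PiLp.inner_apply, RCLike.inner_apply, mul_comm]

private lemma symm_dot {V : Type*} [Fintype V] {A : Matrix V V ℝ} (hA : A.IsHermitian)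
    (u v : V → ℝ) : u ⬝ᵥ (A *ᵥ v) = (A *ᵥ u) ⬝ᵥ v := by
  have hAT : Aᵀ = A := by ext i j; exact congrFun (congrFun hA i) j
  rw [Matrix.dotProduct_mulVec, ← Matrix.vecMul_transpose, hAT]

private lemma rayleigh_aux {V : Type*} [Fintype V] [DecidableEq V] {A : Matrix V V ℝ}
    (hA : A.IsHermitian) (μ : ℝ) (i₀ : V)
    (hmin : ∀ j, j ≠ i₀ → μ ≤ hA.eigenvalues j)
    (x : EuclideanSpace ℝ V) (hx : ⟪hA.eigenvectorBasis i₀, x⟫ = 0) :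
    μ * ⟪x, x⟫ ≤ (x : V → ℝ) ⬝ᵥ (A *ᵥ (x : V → ℝ)) := by
  set B := hA.eigenvectorBasis with hB
  set c : V → ℝ := fun j => ⟪B j, x⟫ with hc
  have hxr : (∑ j, c j • B j) = x := B.sum_repr' x
  set y : EuclideanSpace ℝ V := WithLp.toLp 2 (A *ᵥ (x : V → ℝ)) with hy
  have hBx : ∀ j, ⟪B j, y⟫ = hA.eigenvalues j * c j := by
    intro j
    rw [← dot_eq_inner', hy, WithLp.ofLp_toLp, symm_dot hA]
    have hev : (A *ᵥ (B j : V → ℝ)) = hA.eigenvalues j • (B j : V → ℝ) :=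
      hA.mulVec_eigenvectorBasis j
    rw [hev, smul_dotProduct, dot_eq_inner']
    simp only [smul_eq_mul]
    rfl
  have hqf : (x : V → ℝ) ⬝ᵥ (y : V → ℝ) = ∑ j, hA.eigenvalues j * c j ^ 2 := by
    rw [dot_eq_inner', ← hxr, sum_inner]
    refine Finset.sum_congr rfl fun j _ => ?_
    rw [real_inner_smul_left, hBx j]
    ring
  have hnorm : ⟪x, x⟫ = ∑ j, c j ^ 2 := by
    nth_rw 1 [← hxr]
    rw [sum_inner]
    refine Finset.sum_congr rfl fun j _ => ?_
    rw [real_inner_smul_left]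
    show c j * c j = _
    ring
  rw [hnorm, Finset.mul_sum]
  calc ∑ j, μ * c j ^ 2 ≤ ∑ j, hA.eigenvalues j * c j ^ 2 := by
        refine Finset.sum_le_sum fun j _ => ?_
        by_cases hj : j = i₀
        · subst hj
          have hc0 : c j = 0 := hx
          simp [hc0]
        · exact mul_le_mul_of_nonneg_right (hmin j hj) (sq_nonneg _)
    _ = (x : V → ℝ) ⬝ᵥ (A *ᵥ (x : V → ℝ)) := by rw [← hqf, hy]

private theorem alliance_aux {V : Type*} [Fintype V] [DecidableEq V]
    (G : SimpleGraph V) [DecidableRel G.Adj]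
    (n : ℕ) (hn : Fintype.card V = n)
    (mu : ℝ)
    (hL : (G.lapMatrix ℝ).IsHermitian) (i₀ i₁ : V) (hne01 : i₀ ≠ i₁)
    (heq1 : hL.eigenvalues i₁ = mu) (hmin : ∀ j, j ≠ i₀ → mu ≤ hL.eigenvalues j)
    (S : Finset V) (hS : S.Nonempty)
    (hdef : ∀ v ∈ S, (G.neighborFinset v \ S).card ≤ (G.neighborFinset v ∩ S).card + 1) :
    ⌈(n : ℝ) * mu / ((n : ℝ) + mu)⌉ ≤ (S.card : ℤ) := by
  classical
  obtain ⟨v₀, hv₀⟩ := hS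
  have hV : Nonempty V := ⟨v₀⟩
  have hmu0 : (0:ℝ) ≤ mu := by
    rw [← heq1]; exact (posSemidef_lapMatrix ℝ G).eigenvalues_nonneg i₁
  set s : ℝ := (S.card : ℝ) with hsdef
  have hs1 : (1:ℝ) ≤ s := by
    have h : 1 ≤ S.card := Finset.card_pos.mpr ⟨v₀, hv₀⟩
    rw [hsdef]; exact_mod_cast h
  have hs0 : (0:ℝ) < s := lt_of_lt_of_le one_pos hs1
  have hsn : s ≤ (n:ℝ) := by
    have h := S.card_le_univ
    rw [hn] at h
    rw [hsdef]; exact_mod_cast h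
  set N : ℝ := (n : ℝ) with hNdef
  have hN0 : (0:ℝ) < N := hs0.trans_le hsn
  -- the test vector
  set x : EuclideanSpace ℝ V := WithLp.toLp 2 (fun v => (if v ∈ S then (1:ℝ) else 0) - s / N) with hxdef
  have hxv : ∀ v, x v = (if v ∈ S then (1:ℝ) else 0) - s / N := fun v => rfl
  have hsumχ : ∑ v : V, (if v ∈ S then (1:ℝ) else 0) = s := by
    simp [hsdef]
  have hsum : ∑ v : V, x v = 0 := by
    simp only [hxv, Finset.sum_sub_distrib, Finset.sum_const, Finset.card_univ, hn,
      nsmul_eq_mul, hsumχ]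
    rw [← hNdef]
    field_simp
    ring
  have hQ : N * (∑ v : V, x v ^ 2) = s * (N - s) := by
    have hx2 : ∀ v : V, x v ^ 2 = (if v ∈ S then (1:ℝ) else 0)
        - 2*(s/N)*(if v ∈ S then (1:ℝ) else 0) + (s/N)^2 := by
      intro v; rw [hxv]; by_cases hv : v ∈ S <;> simp [hv] <;> ring
    have h5 : ∑ v : V, x v ^ 2 = s - 2*(s/N)*s + N*(s/N)^2 := by
      simp only [hx2, Finset.sum_add_distrib, Finset.sum_sub_distrib, hsumχ,
        ← Finset.mul_sum, Finset.sum_const, Finset.card_univ, hn, nsmul_eq_mul]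
      rw [hNdef]
    rw [h5]; field_simp; ring
  -- the cut and quadratic form
  set cutR : ℝ := ∑ i ∈ S, ((G.neighborFinset i \ S).card : ℝ) with hcutdef
  have hfirst : ∑ i : V, ∑ j : V, (if G.Adj i j ∧ i ∈ S ∧ j ∉ S then (1:ℝ) else 0) = cutR := by
    have inner_eq : ∀ i : V, ∑ j : V, (if G.Adj i j ∧ i ∈ S ∧ j ∉ S then (1:ℝ) else 0)
        = if i ∈ S then ((G.neighborFinset i \ S).card : ℝ) else 0 := by
      intro i
      by_cases hi : i ∈ S
      · simp only [hi, true_and, if_true]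
        rw [Finset.sum_boole]
        congr 2
        ext j
        simp [SimpleGraph.mem_neighborFinset]
      · simp [hi]
    rw [Finset.sum_congr rfl fun i _ => inner_eq i, Finset.sum_ite_mem, Finset.univ_inter]
  have hform : (x : V → ℝ) ⬝ᵥ (G.lapMatrix ℝ *ᵥ (x : V → ℝ)) = cutR := by
    rw [← Matrix.toLinearMap₂'_apply', lapMatrix_toLinearMap₂']
    have hsplit : ∀ i j : V, (if G.Adj i j then (x i - x j)^2 else 0) =
        (if G.Adj i j ∧ i ∈ S ∧ j ∉ S then (1:ℝ) else 0)
        + (if G.Adj j i ∧ j ∈ S ∧ i ∉ S then (1:ℝ) else 0) := by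
      intro i j
      by_cases hij : G.Adj i j
      · have hji := hij.symm
        by_cases hi : i ∈ S <;> by_cases hj : j ∈ S <;>
          simp only [hxv, hij, hji, hi, hj, if_true, if_false, and_true, and_false,
            true_and, false_and, not_true, not_false_iff, if_neg, not_false_eq_true] <;>
          ring
      · have hji : ¬ G.Adj j i := fun h => hij h.symm
        simp [hij, hji]
    simp only [hsplit, Finset.sum_add_distrib]
    rw [hfirst]
    rw [Finset.sum_comm, hfirst]
    ring
  -- cut bound
  have hcut : cutR ≤ s^2 := by
    have hb : ∀ v ∈ S, ((G.neighborFinset v \ S).card : ℝ) ≤ s := by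
      intro v hv
      have h1 := hdef v hv
      have h2 : (G.neighborFinset v ∩ S).card ≤ S.card - 1 := by
        have hsub : G.neighborFinset v ∩ S ⊆ S.erase v := by
          intro u hu
          rw [Finset.mem_inter] at hu
          rw [Finset.mem_erase]
          exact ⟨fun h => (G.ne_of_adj ((SimpleGraph.mem_neighborFinset _ _ _).mp hu.1)).symm
            (h ▸ rfl), hu.2⟩
        calc (G.neighborFinset v ∩ S).card ≤ (S.erase v).card := Finset.card_le_card hsub
          _ = S.card - 1 := Finset.card_erase_of_mem hv
      have hc1 : 1 ≤ S.card := Finset.card_pos.mpr ⟨v, hv⟩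
      have h3 : (G.neighborFinset v \ S).card ≤ S.card := by omega
      rw [hsdef]; exact_mod_cast h3
    calc cutR ≤ ∑ _v ∈ S, s := Finset.sum_le_sum hb
      _ = s * s := by rw [Finset.sum_const, nsmul_eq_mul]
      _ = s^2 := (sq s).symm
  -- central inequality
  have hQnn : (0:ℝ) ≤ ∑ v : V, x v ^ 2 := Finset.sum_nonneg fun v _ => sq_nonneg _
  have central : mu * (∑ v : V, x v ^ 2) ≤ s ^ 2 := by
    rcases eq_or_lt_of_le hmu0 with h0 | h0
    · rw [← h0, zero_mul]; positivity
    · set B := hL.eigenvectorBasis with hB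
      set o : EuclideanSpace ℝ V := WithLp.toLp 2 (fun _ => (1:ℝ)) with ho
      have hzero : G.lapMatrix ℝ *ᵥ (o : V → ℝ) = 0 := by
        rw [ho]; exact lapMatrix_mulVec_const_eq_zero G
      have hBo : ∀ j, j ≠ i₀ → ⟪B j, o⟫ = 0 := by
        intro j hj
        have h1 : (B j : V → ℝ) ⬝ᵥ (G.lapMatrix ℝ *ᵥ (o : V → ℝ)) = 0 := by
          rw [hzero, dotProduct_zero]
        rw [symm_dot hL] at h1
        have hev : (G.lapMatrix ℝ *ᵥ (B j : V → ℝ)) = hL.eigenvalues j • (B j : V → ℝ) :=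
          hL.mulVec_eigenvectorBasis j
        rw [hev, smul_dotProduct, dot_eq_inner', smul_eq_mul] at h1
        have hejpos : 0 < hL.eigenvalues j := lt_of_lt_of_le h0 (hmin j hj)
        exact (mul_eq_zero.mp h1).resolve_left (ne_of_gt hejpos)
      have hor : ∑ j, (⟪B j, o⟫ : ℝ) • B j = o := B.sum_repr' o
      have hsingle : (⟪B i₀, o⟫ : ℝ) • B i₀ = o := by
        conv_rhs => rw [← hor]
        symm
        apply Finset.sum_eq_single_of_mem i₀ (Finset.mem_univ i₀)
        intro j _ hj
        rw [hBo j hj, zero_smul]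
      have hco : (⟪B i₀, o⟫ : ℝ) ≠ 0 := by
        intro h
        rw [h, zero_smul] at hsingle
        have h2 := congrArg (fun z : EuclideanSpace ℝ V => z v₀) hsingle
        rw [ho] at h2
        simpa using h2
      have hxo : (⟪o, x⟫ : ℝ) = 0 := by
        rw [← dot_eq_inner', ho]
        simpa [dotProduct] using hsum
      have horth : (⟪B i₀, x⟫ : ℝ) = 0 := by
        have hmul : (⟪B i₀, o⟫ : ℝ) * ⟪B i₀, x⟫ = 0 := by
          rw [← real_inner_smul_left, hsingle, hxo]
        exact (mul_eq_zero.mp hmul).resolve_left hco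
      have hray := rayleigh_aux hL mu i₀ hmin x horth
      rw [hform] at hray
      have hinner : (⟪x, x⟫ : ℝ) = ∑ v : V, x v ^ 2 := by
        rw [← dot_eq_inner']
        simp [dotProduct, sq]
      rw [hinner] at hray
      linarith
  -- final arithmetic
  have key : mu * (s * (N - s)) ≤ N * s ^ 2 := by
    have h6 := mul_le_mul_of_nonneg_left central (le_of_lt hN0)
    calc mu * (s * (N - s)) = N * (mu * ∑ v : V, x v ^ 2) := by rw [← hQ]; ring
      _ ≤ N * s ^ 2 := h6
  have key2 : mu * N ≤ s * (N + mu) := by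
    have hdiv : mu * (N - s) ≤ N * s := by nlinarith [key, hs0]
    nlinarith [hdiv]
  rw [Int.ceil_le]
  push_cast
  rw [← hsdef]
  rw [div_le_iff₀ (by linarith : (0:ℝ) < N + mu)]
  nlinarith [key2]

theorem stmt_0 {V : Type*} [Fintype V] [DecidableEq V]
    (G : SimpleGraph V) [DecidableRel G.Adj]
    (n : ℕ) (hn : Fintype.card V = n)
    (mu : ℝ)
    (hmu : ∃ hL : (G.lapMatrix ℝ).IsHermitian, IsSecondSmallest hL.eigenvalues mu)
    (S : Finset V) (hS : S.Nonempty)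
    (hdef : ∀ v ∈ S, (G.neighborFinset v \ S).card ≤ (G.neighborFinset v ∩ S).card + 1)
    :
    ⌈(n : ℝ) * mu / ((n : ℝ) + mu)⌉ ≤ (S.card : ℤ) := by
  obtain ⟨hL, i₀, i₁, hne01, _, heq1, hmin⟩ := hmu
  exact alliance_aux G n hn mu hL i₀ i₁ hne01 heq1 hmin S hS hdef
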